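/- The generating function identity B_k(x) = 1 + x·B_k(x)^k holds for the formal power series B_k whose n-th coefficient is the Fuss–Catalan number FC_n(k,1) = (1/(nk+1))·C(nk+1, n). That is, the formal power series ∑_n FC_n(k,1) xⁿ satisfies B = 1 + x·B^k. -/

import Mathlib

open PowerSeries

/-- The Fuss–Catalan generating function `∑ₙ FC_n(k,1) xⁿ` with
`FC_n(k,1) = (1/(nk+1))·binomial(nk+1, n)`. -/
noncomputable def fussCatalanGF (k : ℕ) : PowerSeries ℚ :=
  PowerSeries.mk fun n => ((n * k + 1).choose n : ℚ) / (n * k + 1)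

noncomputable def raney (k n p : ℕ) : ℚ :=
  if n = 0 then 1 else (p : ℚ) * ((n * k + p).choose n : ℚ) / (n * k + p)

lemma raney_zero (k p : ℕ) : raney k 0 p = 1 := by simp [raney]

lemma raney_succ_zero (k n : ℕ) : raney k (n + 1) 0 = 0 := by simp [raney]

lemma raney_eq (k n p : ℕ) (h : n = 0 → 1 ≤ p) :
    raney k n p = (p : ℚ) * ((n * k + p).choose n : ℚ) / (n * k + p) := by
  rcases n with _ | n
  · have hp := h rfl
    have : (p : ℚ) ≠ 0 := by positivity
    simp [raney, div_self this]
  · simp [raney]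

lemma raney_rec (k n p : ℕ) (hk : 1 ≤ k) :
    raney k (n + 1) (p + 1) = raney k (n + 1) p + raney k n (p + k) := by
  have e1 : (n + 1) * k + (p + 1) = ((n + 1) * k + p) + 1 := by omega
  have e2 : n * k + (p + k) = (n + 1) * k + p := by ring
  rw [raney_eq k (n + 1) (p + 1) (by omega), raney_eq k (n + 1) p (by omega),
    raney_eq k n (p + k) (by omega), e1, e2]
  have hmpos : 0 < (n + 1) * k + p :=
    Nat.lt_of_lt_of_le (Nat.mul_pos n.succ_pos hk) (Nat.le_add_right _ _)
  have hnm : n ≤ (n + 1) * k + p := by nlinarith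
  have pascal : (((n + 1) * k + p) + 1).choose (n + 1)
      = ((n + 1) * k + p).choose n + ((n + 1) * k + p).choose (n + 1) :=
    Nat.choose_succ_succ _ n
  have key : (((n + 1) * k + p).choose (n + 1) : ℚ) * ((n : ℚ) + 1)
      = (((n + 1) * k + p).choose n : ℚ) * (((n : ℚ) + 1) * k + p - n) := by
    have h := Nat.choose_succ_right_eq ((n + 1) * k + p) n
    calc (((n + 1) * k + p).choose (n + 1) : ℚ) * ((n : ℚ) + 1)
        = ((((n + 1) * k + p).choose (n + 1) * (n + 1) : ℕ) : ℚ) := by push_cast; ring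
      _ = ((((n + 1) * k + p).choose n * (((n + 1) * k + p) - n) : ℕ) : ℚ) := by rw [h]
      _ = (((n + 1) * k + p).choose n : ℚ) * (((n : ℚ) + 1) * k + p - n) := by
          push_cast [Nat.cast_sub hnm]; ring
  have hm0 : ((n : ℚ) + 1) * k + p ≠ 0 := by
    have : (0 : ℚ) < ((n : ℚ) + 1) * k + p := by
      have hk' : (1 : ℚ) ≤ (k : ℚ) := by exact_mod_cast hk
      have hn' : (0 : ℚ) ≤ (n : ℚ) := Nat.cast_nonneg n
      have hp' : (0 : ℚ) ≤ (p : ℚ) := Nat.cast_nonneg p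
      nlinarith
    linarith
  have hm1 : ((n : ℚ) + 1) * k + p + 1 ≠ 0 := by
    have : (0 : ℚ) ≤ ((n : ℚ) + 1) * k + p := by
      have := hm0
      have hk' : (0 : ℚ) ≤ (k : ℚ) := Nat.cast_nonneg k
      positivity
    linarith
  rw [pascal]
  push_cast
  field_simp
  linear_combination ((↑n + 1) * ↑k + ↑p) * (k : ℚ) * key

/-- Convolution identity `∑ R_i(p)·R_{n-i}(1) = R_n(p+1)`. -/
lemma raney_conv (k : ℕ) (hk : 1 ≤ k) :
    ∀ n p, ∑ i ∈ Finset.range (n + 1), raney k i p * raney k (n - i) 1 = raney k n (p + 1) := by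
  intro n
  induction n with
  | zero => intro p; simp [raney_zero]
  | succ n ih =>
    intro p
    induction p with
    | zero =>
      rw [Finset.sum_range_succ']
      have h0 : ∀ j ∈ Finset.range (n + 1), raney k (j + 1) 0 * raney k (n + 1 - (j + 1)) 1 = 0 := by
        intro j _; rw [raney_succ_zero]; ring
      rw [Finset.sum_congr rfl h0]
      simp [raney_zero]
    | succ p ihp =>
      have split : ∀ i, raney k i (p + 1) =
          raney k i p + (if i = 0 then 0 else raney k (i - 1) (p + k)) := by
        intro i
        rcases i with _ | i
        · simp [raney_zero]
        · simp only [Nat.succ_sub_one, if_neg (Nat.succ_ne_zero i)]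
          exact raney_rec k i p hk
      calc ∑ i ∈ Finset.range (n + 2), raney k i (p + 1) * raney k (n + 1 - i) 1
          = ∑ i ∈ Finset.range (n + 2), (raney k i p * raney k (n + 1 - i) 1
              + (if i = 0 then 0 else raney k (i - 1) (p + k)) * raney k (n + 1 - i) 1) := by
            refine Finset.sum_congr rfl fun i _ => ?_
            rw [split i]; ring
        _ = (∑ i ∈ Finset.range (n + 2), raney k i p * raney k (n + 1 - i) 1)
            + ∑ i ∈ Finset.range (n + 2),
                (if i = 0 then 0 else raney k (i - 1) (p + k)) * raney k (n + 1 - i) 1 :=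
            Finset.sum_add_distrib
        _ = raney k (n + 1) (p + 1)
            + ∑ j ∈ Finset.range (n + 1), raney k j (p + k) * raney k (n - j) 1 := by
            rw [ihp, Finset.sum_range_succ']
            simp only [if_neg (Nat.succ_ne_zero _), Nat.succ_sub_one, if_pos rfl, zero_mul,
              add_zero, Nat.succ_sub_succ]
            simp
        _ = raney k (n + 1) (p + 1) + raney k n (p + k + 1) := by rw [ih (p + k)]
        _ = raney k (n + 1) (p + 1 + 1) := by
            rw [raney_rec k n (p + 1) hk]
            have : p + 1 + k = p + k + 1 := by omega
            rw [this]


lemma coeff_fussCatalanGF (k n : ℕ) :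
    PowerSeries.coeff n (fussCatalanGF k) = raney k n 1 := by
  rw [fussCatalanGF, PowerSeries.coeff_mk, raney_eq k n 1 (fun _ => le_refl 1)]
  push_cast
  ring

lemma coeff_fussCatalanGF_pow (k : ℕ) (hk : 1 ≤ k) :
    ∀ p n, PowerSeries.coeff n ((fussCatalanGF k) ^ (p + 1)) = raney k n (p + 1) := by
  intro p
  induction p with
  | zero => intro n; rw [pow_one, coeff_fussCatalanGF]
  | succ p ih =>
    intro n
    rw [pow_succ, PowerSeries.coeff_mul, Finset.Nat.sum_antidiagonal_eq_sum_range_succ_mk]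
    have : ∀ i ∈ Finset.range (n + 1),
        PowerSeries.coeff i ((fussCatalanGF k) ^ (p + 1)) *
          PowerSeries.coeff (n - i) (fussCatalanGF k)
        = raney k i (p + 1) * raney k (n - i) 1 := by
      intro i _; rw [ih, coeff_fussCatalanGF]
    rw [Finset.sum_congr rfl this, raney_conv k hk n (p + 1)]

lemma fussCatalan_step (k n : ℕ) (hk : 1 ≤ k) :
    PowerSeries.coeff (n + 1) (fussCatalanGF k) = raney k n k := by
  rw [fussCatalanGF, PowerSeries.coeff_mk, raney_eq k n k (fun _ => hk)]
  have e2 : n * k + k = (n + 1) * k := by ring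
  have key := Nat.add_one_mul_choose_eq ((n + 1) * k) n
  have keyq : ((((n + 1) * k : ℕ) : ℚ) + 1) * (((n + 1) * k).choose n : ℚ)
      = ((((n + 1) * k + 1).choose (n + 1) : ℕ) : ℚ) * ((n : ℚ) + 1) := by
    exact_mod_cast congrArg (Nat.cast : ℕ → ℚ) key
  have hmpos : 0 < (n + 1) * k := Nat.mul_pos n.succ_pos hk
  have hm0 : ((n : ℚ) + 1) * (k : ℚ) ≠ 0 := by positivity
  have hm1 : ((n : ℚ) + 1) * (k : ℚ) + 1 ≠ 0 := by positivity
  rw [e2]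
  have hk' : (0 : ℚ) < (k : ℚ) := by exact_mod_cast hk
  have hn' : (0 : ℚ) ≤ (n : ℚ) * k := mul_nonneg (Nat.cast_nonneg n) (le_of_lt hk')
  push_cast at keyq ⊢
  rw [div_eq_div_iff (by nlinarith) (by nlinarith)]
  linear_combination (-(k : ℚ)) * keyq

theorem stmt_8 (k : ℕ) (hk : 1 ≤ k) :
    fussCatalanGF k = 1 + PowerSeries.X * (fussCatalanGF k) ^ k := by
  ext n
  rcases n with _ | n
  · simp [fussCatalanGF]
  · rw [map_add, PowerSeries.coeff_succ_X_mul]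
    obtain ⟨p, rfl⟩ : ∃ p, k = p + 1 := ⟨k - 1, by omega⟩
    rw [coeff_fussCatalanGF_pow (p + 1) hk p n, fussCatalan_step (p + 1) n hk]
    simp
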